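/- arXiv:1103.4335 — 2 statements merged into one kernel-verified Lean document; each statement's English description precedes it below -/
import Mathlib

section
/- Let K be a perfect field, s ∈ {1, 2}, and α, ν real numbers with α ∉ {0, 1}. For every integer j ≥ 1 let X^{(j)} be a curve of genus g^{(j)} over K and a^{(j)} ∈ Z an integer. Suppose that, as j → ∞, g^{(j)} → ∞, a^{(j)}/g^{(j)} → α, and liminf |X^{(j)}(K)|/g^{(j)} ≥ ν. Then limsup_{j→∞} f_{s,X^{(j)}}(a^{(j)})/g^{(j)} ≤ φ_{s,ν}(α). -/
open Filter Finset
open scoped Classical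

noncomputable section

/-- Abstract interface for a smooth projective geometrically irreducible curve over `K`,
bundling its closed points (with their degrees), its genus, its function field,
Riemann-Roch spaces of (K-rational) divisors, residue fields at closed points,
uniformizers and evaluation maps. Divisors are modelled as finitely supported
functions from closed points to `ℤ`. -/
structure Curve (K : Type) [Field K] : Type 1 where
  /-- the closed points of the curve -/
  Point : Type
  /-- the degree of a closed point -/
  degPt : Point → ℕ
  degPt_pos : ∀ P, 0 < degPt P
  /-- the genus -/
  genus : ℕ
  /-- the function field K(X) -/
  F : Type
  [fieldF : Field F]
  [algF : Algebra K F]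
  /-- principal divisor of a function (junk value at 0) -/
  divOf : F → (Point →₀ ℤ)
  /-- Riemann-Roch space of a divisor -/
  L : (Point →₀ ℤ) → Submodule K F
  mem_L : ∀ (f : F) (D : Point →₀ ℤ), f ∈ L D ↔ (f ≠ 0 → 0 ≤ divOf f + D)
  /-- a chosen uniformizer at each point -/
  z : Point → F
  /-- evaluation of a function at a rational point (junk value at poles / non-rational points) -/
  eval : Point → F → K
  /-- residue field at a closed point -/
  Res : Point → Type
  [fieldRes : ∀ P, Field (Res P)]
  [algRes : ∀ P, Algebra K (Res P)]
  finrank_Res : ∀ P, Module.finrank K (Res P) = degPt P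
  /-- evaluation of a function at a closed point (junk value at poles) -/
  evalRes : (P : Point) → F → Res P

attribute [instance] Curve.fieldF Curve.algF Curve.fieldRes Curve.algRes

namespace Curve

variable {K : Type} [Field K] (X : Curve K)

/-- the degree of a divisor -/
def deg (D : X.Point →₀ ℤ) : ℤ := D.sum fun P n => n * (X.degPt P : ℤ)

/-- a closed point, viewed as a divisor -/
def pt (P : X.Point) : X.Point →₀ ℤ := Finsupp.single P 1

/-- `l(D)`, the dimension of the Riemann-Roch space of `D` -/
def l (D : X.Point →₀ ℤ) : ℕ := Module.finrank K (X.L D)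

/-- the number of `K`-rational points of `X`, i.e. of closed points of degree 1 -/
def numPts : ℕ := Nat.card {P : X.Point // X.degPt P = 1}

/-- a divisor is ordinary if `l(D) = max (0, deg D + 1 - g)` -/
def Ordinary (D : X.Point →₀ ℤ) : Prop := (X.l D : ℤ) = max 0 (X.deg D + 1 - (X.genus : ℤ))

/-- `E` is the base locus of a subspace `V ⊆ L(B)`: the largest divisor `E` with
`V ⊆ L(B - E)`. -/
def IsBaseLocus (B : X.Point →₀ ℤ) (V : Submodule K X.F) (E : X.Point →₀ ℤ) : Prop :=
  V ≤ X.L (B - E) ∧ ∀ E' : X.Point →₀ ℤ, V ≤ X.L (B - E') → E' ≤ E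

/-- the generalized evaluation map `ev_{G,D}` at the rational points `P i`
(with the chosen uniformizers) -/
def evG (D : X.Point →₀ ℤ) {n : ℕ} (P : Fin n → X.Point) (f : X.F) : Fin n → K :=
  fun i => X.eval (P i) (X.z (P i) ^ (D (P i)) * f)

/-- the underlying set of the generalized Goppa code `C(G,D)`, where `G` is given by
the rational points `P i` (with the chosen uniformizers): the image of `L(D)` under
the generalized evaluation map. -/
def codeSet (D : X.Point →₀ ℤ) {n : ℕ} (P : Fin n → X.Point) : Set (Fin n → K) :=
  {c | ∃ f ∈ X.L D, c = X.evG D P f}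

end Curve

/-- the function `G_q(n)` -/
def Gq (q : ℕ) (n : ℕ) : ℝ :=
  ∑ k ∈ Finset.Icc 1 (n - 2),
    ((q : ℝ) ^ (n - k) - 1) * ((q : ℝ) ^ (n - k - 1) - 1) /
      (((q : ℝ) ^ n - 1) * ((q : ℝ) ^ (n - 1) - 1))

namespace Curve

variable {K : Type} [Field K] (X : Curve K)

/-- the function `f_{1,X}` -/
def f1 (a : ℤ) : ℤ :=
  if a = -1 then 1
  else if 0 ≤ a ∧ a ≤ (X.genus : ℤ) - 2 then (X.genus : ℤ)
  else 0

/-- the function `f_{2,X}` -/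
def f2 (a : ℤ) : ℤ :=
  if a = (X.genus : ℤ) - 2 then (X.genus : ℤ)
  else if -2 ≤ a ∧ a ≤ (X.genus : ℤ) - 3 then
    if Finite K then
      sInf {m : ℤ | ∃ w : ℕ, 2 ≤ w ∧ (w : ℤ) ≤ (X.genus : ℤ) - 1 - a ∧
        m = ⌊((X.genus : ℝ) - 1 - (a : ℝ) - (w : ℝ)) +
          (1 + ((Nat.card K : ℝ) ^ (w - 2) - 1) / ((Nat.card K : ℝ) ^ w - 1))⁻¹ *
          (2 * (X.genus : ℝ) - 2 + 2 * (a : ℝ) + 4 * (w : ℝ) -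
            2 * Gq (Nat.card K) w * (X.numPts : ℝ))⌋}
    else 3 * (X.genus : ℤ) + 3 + a
  else 0

/-- the function `f_{s,X}` for `s ∈ {1, 2}` -/
def fs (s : ℕ) (a : ℤ) : ℤ := if s = 1 then X.f1 a else X.f2 a

end Curve

/-- the function `φ_{1,ν}` -/
def phi1 (_ν : ℝ) (α : ℝ) : ℝ := if 0 ≤ α ∧ α ≤ 1 then 1 else 0

/-- the function `φ_{2,ν}` (relative to the base field `K`) -/
def phi2 (K : Type) [Field K] (ν α : ℝ) : ℝ :=
  if 0 ≤ α ∧ α < 1 then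
    if Finite K then
      (3 * (Nat.card K : ℝ) ^ 2 + 1) / ((Nat.card K : ℝ) ^ 2 + 1)
        + ((Nat.card K : ℝ) ^ 2 - 1) / ((Nat.card K : ℝ) ^ 2 + 1) * α
        - (2 * (Nat.card K : ℝ) ^ 2 / ((Nat.card K : ℝ) ^ 4 - 1)) * ν
    else 3 + α
  else if α = 1 then 4 else 0

/-- the function `φ_{s,ν}` for `s ∈ {1, 2}` -/
def phis (K : Type) [Field K] (s : ℕ) (ν α : ℝ) : ℝ :=
  if s = 1 then phi1 ν α else phi2 K ν α

/-- a linear code `C ⊆ K^n` is intersecting if the supports of any two nonzero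
codewords intersect -/
def IsIntersecting {K : Type} [Field K] {n : ℕ} (C : Submodule K (Fin n → K)) : Prop :=
  ∀ c ∈ C, c ≠ 0 → ∀ c' ∈ C, c' ≠ 0 → ∃ i, c i * c' i ≠ 0

/-- `μ_K(L)`: the bilinear complexity of the multiplication of the extension `L/K`,
i.e. the smallest length of a multiplication algorithm for `L/K` -/
def muKL (K L : Type) [Field K] [Field L] [Algebra K L] : ℕ :=
  sInf {n : ℕ | ∃ (φ ψ : Fin n → (L →ₗ[K] K)) (w : Fin n → L),
    ∀ x y : L, x * y = ∑ i, (φ i x * ψ i y) • w i}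

/-- `μ_q(k) = μ_{F_q}(F_{q^k})`: the bilinear complexity of multiplication in the
degree-`k` extension of `K = F_q` -/
def muq (K : Type) [Field K] (k : ℕ) : ℕ :=
  sInf {n : ℕ | ∃ (L : Type) (_ : Field L) (_ : Algebra K L),
    Module.finrank K L = k ∧
      ∃ (φ ψ : Fin n → (L →ₗ[K] K)) (w : Fin n → L),
        ∀ x y : L, x * y = ∑ i, (φ i x * ψ i y) • w i}

/-- `m_q = liminf_k μ_q(k)/k` -/
def mq (K : Type) [Field K] : ℝ := liminf (fun k : ℕ => (muq K k : ℝ) / k) atTop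

/-- `M_q = limsup_k μ_q(k)/k` -/
def Mq (K : Type) [Field K] : ℝ := limsup (fun k : ℕ => (muq K k : ℝ) / k) atTop

/-- the Ihara constant `A(q)`: the largest real number which is the limit of
`|X^{(j)}(F_q)| / g^{(j)}` along a sequence of curves over `F_q` whose genus tends
to infinity -/
def IharaA (K : Type) [Field K] : ℝ :=
  sSup {A : ℝ | ∃ X : ℕ → Curve K,
    Tendsto (fun j => ((X j).genus : ℝ)) atTop atTop ∧
    Tendsto (fun j => ((X j).numPts : ℝ) / ((X j).genus : ℝ)) atTop (nhds A)}

/-- the constant `A'(q)`: as `A(q)`, with the extra requirement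
`g^{(j+1)}/g^{(j)} → 1` -/
def IharaA' (K : Type) [Field K] : ℝ :=
  sSup {A : ℝ | ∃ X : ℕ → Curve K,
    Tendsto (fun j => ((X j).genus : ℝ)) atTop atTop ∧
    Tendsto (fun j => ((X j).numPts : ℝ) / ((X j).genus : ℝ)) atTop (nhds A) ∧
    Tendsto (fun j => ((X (j + 1)).genus : ℝ) / ((X j).genus : ℝ)) atTop (nhds 1)}

/-- `R_q`: the maximal asymptotic rate of linear intersecting codes over `F_q` -/
def maxRate (K : Type) [Field K] : ℝ :=
  limsup (fun n : ℕ =>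
    sSup {r : ℝ | ∃ C : Submodule K (Fin n → K),
      IsIntersecting C ∧ r = (Module.finrank K C : ℝ) / n}) atTop

end

noncomputable section AuxiliaryLemmas

private lemma aux_limsup_le {u : ℕ → ℝ} {b c : ℝ} (h1 : ∀ᶠ j in atTop, b ≤ u j)
    (h2 : ∀ᶠ j in atTop, u j ≤ c) : limsup u atTop ≤ c := by
  rw [Filter.limsup_eq]
  refine csInf_le ⟨b, fun x hx => ?_⟩ h2
  obtain ⟨j, hj1, hj2⟩ := (h1.and hx).exists
  exact hj1.trans hj2

private lemma aux_Gq_nonneg {q : ℕ} (hq : 2 ≤ q) (w : ℕ) : 0 ≤ Gq q w := by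
  have hQ : (1:ℝ) ≤ (q:ℝ) := by exact_mod_cast hq.trans' (by norm_num)
  refine Finset.sum_nonneg fun k _ => div_nonneg (mul_nonneg ?_ ?_) (mul_nonneg ?_ ?_) <;>
    · simp only [sub_nonneg]
      exact one_le_pow₀ hQ

private lemma aux_term_bounds {Q : ℝ} (hQ : 2 ≤ Q) {w k : ℕ} (hk1 : 1 ≤ k) (hk2 : k ≤ w - 2)
    (hw : 3 ≤ w) :
    ((Q^2)⁻¹)^k - 2 * Q⁻¹^(w-1) * Q⁻¹^k ≤
      (Q^(w-k) - 1) * (Q^(w-k-1) - 1) / ((Q^w - 1) * (Q^(w-1) - 1)) ∧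
    (Q^(w-k) - 1) * (Q^(w-k-1) - 1) / ((Q^w - 1) * (Q^(w-1) - 1)) ≤
      (Q^w * Q^(w-1) / ((Q^w - 1) * (Q^(w-1) - 1))) * ((Q^2)⁻¹)^k := by
  have hQ1 : (1:ℝ) < Q := by linarith
  have hQ0 : (0:ℝ) < Q := by linarith
  have eA : Q^(w-k) * Q^k = Q^w := by rw [← pow_add]; congr 1; omega
  have eB : Q^(w-k-1) * Q^k = Q^(w-1) := by rw [← pow_add]; congr 1; omega
  have eAB : Q^(w-k) = Q^(w-k-1) * Q := by rw [← pow_succ]; congr 1; omega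
  have hA1 : (1:ℝ) ≤ Q^(w-k) := one_le_pow₀ hQ1.le
  have hB1 : (1:ℝ) ≤ Q^(w-k-1) := one_le_pow₀ hQ1.le
  have hQk : (0:ℝ) < Q^k := by positivity
  have hQw : (1:ℝ) < Q^w := by
    calc (1:ℝ) < Q := hQ1
    _ = Q^1 := (pow_one Q).symm
    _ ≤ Q^w := pow_le_pow_right₀ hQ1.le (by omega)
  have hQw1 : (1:ℝ) < Q^(w-1) := by
    calc (1:ℝ) < Q := hQ1
    _ = Q^1 := (pow_one Q).symm
    _ ≤ Q^(w-1) := pow_le_pow_right₀ hQ1.le (by omega)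
  have hDen : (0:ℝ) < (Q^w - 1) * (Q^(w-1) - 1) := mul_pos (by linarith) (by linarith)
  have hQQ : (0:ℝ) < Q^w * Q^(w-1) := by positivity
  have hrk : ((Q^2)⁻¹)^k * (Q^w * Q^(w-1)) = Q^(w-k) * Q^(w-k-1) := by
    rw [← eA, ← eB]
    have h2k : ((Q^2)⁻¹)^k * (Q^k * Q^k) = 1 := by
      rw [inv_pow, ← pow_add, ← pow_mul, two_mul]
      exact inv_mul_cancel₀ (by positivity)
    calc ((Q^2)⁻¹)^k * (Q^(w-k) * Q^k * (Q^(w-k-1) * Q^k))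
        = (Q^(w-k) * Q^(w-k-1)) * (((Q^2)⁻¹)^k * (Q^k * Q^k)) := by ring
      _ = Q^(w-k) * Q^(w-k-1) := by rw [h2k, mul_one]
  constructor
  · -- lower bound
    have step1 : (Q^(w-k) - 1) * (Q^(w-k-1) - 1) / (Q^w * Q^(w-1)) ≤
        (Q^(w-k) - 1) * (Q^(w-k-1) - 1) / ((Q^w - 1) * (Q^(w-1) - 1)) := by
      apply div_le_div_of_nonneg_left (by nlinarith) hDen
      nlinarith
    refine le_trans ?_ step1
    rw [le_div_iff₀ hQQ]
    have h1 : Q⁻¹^(w-1) * Q^(w-1) = 1 := by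
      rw [inv_pow]; exact inv_mul_cancel₀ (by positivity)
    have h2 : Q⁻¹^k * Q^w = Q^(w-k) := by
      rw [inv_pow, ← eA, mul_comm (Q^(w-k)) (Q^k), inv_mul_cancel_left₀ hQk.ne']
    have expand : (((Q^2)⁻¹)^k - 2 * Q⁻¹^(w-1) * Q⁻¹^k) * (Q^w * Q^(w-1))
        = Q^(w-k) * Q^(w-k-1) - 2 * Q^(w-k) := by
      have h3 : Q⁻¹^(w-1) * Q⁻¹^k * (Q^w * Q^(w-1)) = Q^(w-k) := by
        calc Q⁻¹^(w-1) * Q⁻¹^k * (Q^w * Q^(w-1))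
            = (Q⁻¹^k * Q^w) * (Q⁻¹^(w-1) * Q^(w-1)) := by ring
          _ = Q^(w-k) * 1 := by rw [h1, h2]
          _ = Q^(w-k) := mul_one _
      calc (((Q^2)⁻¹)^k - 2 * Q⁻¹^(w-1) * Q⁻¹^k) * (Q^w * Q^(w-1))
          = ((Q^2)⁻¹)^k * (Q^w * Q^(w-1)) - 2*(Q⁻¹^(w-1) * Q⁻¹^k * (Q^w * Q^(w-1))) := by ring
        _ = Q^(w-k) * Q^(w-k-1) - 2 * Q^(w-k) := by rw [hrk, h3]
    rw [expand]
    nlinarith [mul_nonneg (by linarith : (0:ℝ) ≤ Q^(w-k-1)) (by linarith : (0:ℝ) ≤ Q - 1)]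
  · -- upper bound
    rw [div_mul_eq_mul_div]
    apply (div_le_div_iff_of_pos_right hDen).mpr
    have : Q^w * Q^(w-1) * ((Q^2)⁻¹)^k = Q^(w-k) * Q^(w-k-1) := by
      rw [mul_comm (Q^w * Q^(w-1)) _]; exact hrk
    rw [this]
    nlinarith

private lemma aux_Icc_geom (x : ℝ) (w : ℕ) :
    ∑ k ∈ Finset.Icc 1 (w-2), x^k = x * ∑ k ∈ Finset.range (w-2), x^k := by
  rw [← Finset.Ico_add_one_right_eq_Icc, Finset.sum_Ico_eq_sum_range]
  rw [Finset.mul_sum]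
  exact Finset.sum_congr rfl fun i _ => by rw [pow_add, pow_one]

private lemma aux_geom_partial_le {x : ℝ} (h0 : 0 ≤ x) (h1 : x < 1) (n : ℕ) :
    ∑ k ∈ Finset.range n, x^k ≤ (1-x)⁻¹ :=
  sum_le_hasSum _ (fun _ _ => by positivity) (hasSum_geometric_of_lt_one h0 h1)

private lemma aux_Gq_le {q : ℕ} (hq : 2 ≤ q) (w : ℕ) : Gq q w ≤ 6 := by
  rcases Nat.lt_or_ge w 3 with hw | hw
  · have h0 : w - 2 = 0 := by omega
    rw [Gq, h0]
    norm_num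
  · have hQ : (2:ℝ) ≤ (q:ℝ) := by exact_mod_cast hq
    have hQ1 : (1:ℝ) < (q:ℝ) := by linarith
    set Q := (q:ℝ) with hQdef
    have hA2 : (2:ℝ) ≤ Q^w := by
      calc (2:ℝ) ≤ Q := hQ
      _ = Q^1 := (pow_one Q).symm
      _ ≤ Q^w := pow_le_pow_right₀ hQ1.le (by omega)
    have hB2 : (2:ℝ) ≤ Q^(w-1) := by
      calc (2:ℝ) ≤ Q := hQ
      _ = Q^1 := (pow_one Q).symm
      _ ≤ Q^(w-1) := pow_le_pow_right₀ hQ1.le (by omega)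
    have hDen : (0:ℝ) < (Q^w - 1) * (Q^(w-1) - 1) := mul_pos (by linarith) (by linarith)
    have hr0 : (0:ℝ) ≤ (Q^2)⁻¹ := by positivity
    have hr1 : (Q^2)⁻¹ < 1 := by
      rw [inv_lt_one_iff₀]
      right; nlinarith
    have hE4 : Q^w * Q^(w-1) / ((Q^w - 1) * (Q^(w-1) - 1)) ≤ 4 := by
      rw [div_le_iff₀ hDen]
      nlinarith
    have hS0 : (0:ℝ) ≤ ∑ k ∈ Finset.Icc 1 (w-2), ((Q^2)⁻¹)^k :=
      Finset.sum_nonneg fun k _ => by positivity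
    have hS43 : ∑ k ∈ Finset.Icc 1 (w-2), ((Q^2)⁻¹)^k ≤ 4/3 := by
      have h1 : ∑ k ∈ Finset.Icc 1 (w-2), ((Q^2)⁻¹)^k ≤ (1 - (Q^2)⁻¹)⁻¹ :=
        sum_le_hasSum _ (fun _ _ => by positivity) (hasSum_geometric_of_lt_one hr0 hr1)
      have h2 : (Q^2)⁻¹ ≤ 1/4 := by
        have h4 : (4:ℝ) ≤ Q^2 := by nlinarith
        calc (Q^2)⁻¹ ≤ (4:ℝ)⁻¹ := inv_anti₀ (by norm_num) h4
        _ = 1/4 := by norm_num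
      have h3 : (1 - (Q^2)⁻¹)⁻¹ ≤ (3/4:ℝ)⁻¹ := inv_anti₀ (by norm_num) (by linarith)
      calc ∑ k ∈ Finset.Icc 1 (w-2), ((Q^2)⁻¹)^k ≤ (1 - (Q^2)⁻¹)⁻¹ := h1
      _ ≤ (3/4:ℝ)⁻¹ := h3
      _ ≤ 4/3 := by norm_num
    calc Gq q w ≤ ∑ k ∈ Finset.Icc 1 (w-2),
        (Q^w * Q^(w-1) / ((Q^w - 1) * (Q^(w-1) - 1))) * ((Q^2)⁻¹)^k := by
          refine Finset.sum_le_sum fun k hk => ?_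
          have hk' := Finset.mem_Icc.1 hk
          exact (aux_term_bounds hQ hk'.1 hk'.2 hw).2
    _ = (Q^w * Q^(w-1) / ((Q^w - 1) * (Q^(w-1) - 1))) *
          ∑ k ∈ Finset.Icc 1 (w-2), ((Q^2)⁻¹)^k := by rw [← Finset.mul_sum]
    _ ≤ 4 * (4/3) := mul_le_mul hE4 hS43 hS0 (by norm_num)
    _ ≤ 6 := by norm_num

private lemma aux_ratio_tendsto {f : ℕ → ℝ} (hf : Tendsto f atTop atTop) :
    Tendsto (fun w => f w / (f w - 1)) atTop (nhds 1) := by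
  have h2 : Tendsto (fun w => f w - 1) atTop atTop :=
    (tendsto_atTop_add_const_right _ (-1) hf).congr fun x => by ring
  have h3 : Tendsto (fun w => (f w - 1)⁻¹) atTop (nhds 0) := h2.inv_tendsto_atTop
  have h4 : Tendsto (fun w => 1 + (f w - 1)⁻¹) atTop (nhds 1) := by
    simpa using tendsto_const_nhds.add h3
  apply h4.congr'
  filter_upwards [h2.eventually_ge_atTop 1] with w hw
  have hne : f w - 1 ≠ 0 := by linarith
  field_simp
  ring

private lemma aux_E_tendsto {Q : ℝ} (hQ : 2 ≤ Q) :
    Tendsto (fun w : ℕ => Q^w * Q^(w-1) / ((Q^w - 1) * (Q^(w-1) - 1))) atTop (nhds 1) := by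
  have hQ1 : (1:ℝ) < Q := by linarith
  have hpow : Tendsto (fun w : ℕ => Q^w) atTop atTop := tendsto_pow_atTop_atTop_of_one_lt hQ1
  have hpow' : Tendsto (fun w : ℕ => Q^(w-1)) atTop atTop := hpow.comp (tendsto_sub_atTop_nat 1)
  have h := (aux_ratio_tendsto hpow).mul (aux_ratio_tendsto hpow')
  rw [mul_one] at h
  exact h.congr fun w => div_mul_div_comm _ _ _ _

private lemma aux_S_tendsto {Q : ℝ} (hQ : 2 ≤ Q) :
    Tendsto (fun w : ℕ => ∑ k ∈ Finset.Icc 1 (w-2), ((Q^2)⁻¹)^k) atTop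
      (nhds ((Q^2)⁻¹ * (1 - (Q^2)⁻¹)⁻¹)) := by
  have hr0 : (0:ℝ) ≤ (Q^2)⁻¹ := by positivity
  have hr1 : (Q^2)⁻¹ < 1 := by
    rw [inv_lt_one_iff₀]; right; nlinarith
  have hgeom : Tendsto (fun n : ℕ => ∑ k ∈ Finset.range n, ((Q^2)⁻¹)^k) atTop
      (nhds ((1 - (Q^2)⁻¹)⁻¹)) := (hasSum_geometric_of_lt_one hr0 hr1).tendsto_sum_nat
  have h2 : Tendsto (fun w : ℕ => (Q^2)⁻¹ * ∑ k ∈ Finset.range (w-2), ((Q^2)⁻¹)^k) atTop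
      (nhds ((Q^2)⁻¹ * (1 - (Q^2)⁻¹)⁻¹)) :=
    (hgeom.comp (tendsto_sub_atTop_nat 2)).const_mul _
  exact h2.congr fun w => (aux_Icc_geom _ w).symm

private lemma aux_Gq_tendsto {q : ℕ} (hq : 2 ≤ q) :
    Tendsto (fun w => Gq q w) atTop (nhds (((q:ℝ)^2 - 1)⁻¹)) := by
  have hQ : (2:ℝ) ≤ (q:ℝ) := by exact_mod_cast hq
  set Q := (q:ℝ) with hQdef
  have hQ1 : (1:ℝ) < Q := by linarith
  have hQ0 : (0:ℝ) < Q := by linarith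
  have hp0 : (0:ℝ) ≤ Q⁻¹ := by positivity
  have hp1 : Q⁻¹ < 1 := inv_lt_one_of_one_lt₀ hQ1
  have hp12 : Q⁻¹ ≤ 1/2 := by
    rw [inv_le_comm₀ hQ0 (by norm_num)]
    linarith
  -- lower and upper bounds
  have hlow : ∀ w : ℕ, (∑ k ∈ Finset.Icc 1 (w-2), ((Q^2)⁻¹)^k) - 2 * Q⁻¹^(w-1) ≤ Gq q w := by
    intro w
    rcases Nat.lt_or_ge w 3 with hw | hw
    · have h0 : w - 2 = 0 := by omega
      rw [Gq, h0, Finset.Icc_eq_empty (by norm_num)]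
      simp only [Finset.sum_empty]
      have : (0:ℝ) ≤ Q⁻¹^(w-1) := by positivity
      linarith
    · have h1 : ∑ k ∈ Finset.Icc 1 (w-2), (((Q^2)⁻¹)^k - 2 * Q⁻¹^(w-1) * Q⁻¹^k) ≤ Gq q w := by
        refine Finset.sum_le_sum fun k hk => ?_
        have hk' := Finset.mem_Icc.1 hk
        exact (aux_term_bounds hQ hk'.1 hk'.2 hw).1
      have h2 : ∑ k ∈ Finset.Icc 1 (w-2), (((Q^2)⁻¹)^k - 2 * Q⁻¹^(w-1) * Q⁻¹^k)
          = (∑ k ∈ Finset.Icc 1 (w-2), ((Q^2)⁻¹)^k)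
            - 2 * Q⁻¹^(w-1) * ∑ k ∈ Finset.Icc 1 (w-2), Q⁻¹^k := by
        rw [Finset.sum_sub_distrib, Finset.mul_sum]
      have h3 : ∑ k ∈ Finset.Icc 1 (w-2), Q⁻¹^k ≤ 1 := by
        rw [aux_Icc_geom]
        have h4 : ∑ k ∈ Finset.range (w-2), Q⁻¹^k ≤ (1 - Q⁻¹)⁻¹ :=
          aux_geom_partial_le hp0 hp1 _
        have h5 : Q⁻¹ * (1 - Q⁻¹)⁻¹ ≤ 1 := by
          rw [← div_eq_mul_inv, div_le_one (by linarith)]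
          linarith
        have h6 : Q⁻¹ * ∑ k ∈ Finset.range (w-2), Q⁻¹^k ≤ Q⁻¹ * (1 - Q⁻¹)⁻¹ :=
          mul_le_mul_of_nonneg_left h4 hp0
        linarith
      have h7 : (0:ℝ) ≤ 2 * Q⁻¹^(w-1) := by positivity
      nlinarith [mul_le_mul_of_nonneg_left h3 h7]
    -- done lower
  have hhigh : ∀ w : ℕ, Gq q w ≤ (Q^w * Q^(w-1) / ((Q^w - 1) * (Q^(w-1) - 1))) *
      ∑ k ∈ Finset.Icc 1 (w-2), ((Q^2)⁻¹)^k := by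
    intro w
    rcases Nat.lt_or_ge w 3 with hw | hw
    · have h0 : w - 2 = 0 := by omega
      rw [Gq, h0, Finset.Icc_eq_empty (by norm_num)]
      simp
    · rw [Finset.mul_sum]
      refine Finset.sum_le_sum fun k hk => ?_
      have hk' := Finset.mem_Icc.1 hk
      exact (aux_term_bounds hQ hk'.1 hk'.2 hw).2
  -- limits of the bounds
  have hpw : Tendsto (fun w : ℕ => Q⁻¹^(w-1)) atTop (nhds 0) :=
    (tendsto_pow_atTop_nhds_zero_of_lt_one hp0 hp1).comp (tendsto_sub_atTop_nat 1)
  have hlowt : Tendsto (fun w : ℕ => (∑ k ∈ Finset.Icc 1 (w-2), ((Q^2)⁻¹)^k) - 2 * Q⁻¹^(w-1))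
      atTop (nhds ((Q^2)⁻¹ * (1 - (Q^2)⁻¹)⁻¹)) := by
    have h := (aux_S_tendsto hQ).sub (hpw.const_mul 2)
    rw [mul_zero, sub_zero] at h
    exact h
  have hhight : Tendsto (fun w : ℕ => (Q^w * Q^(w-1) / ((Q^w - 1) * (Q^(w-1) - 1))) *
      ∑ k ∈ Finset.Icc 1 (w-2), ((Q^2)⁻¹)^k) atTop
      (nhds ((Q^2)⁻¹ * (1 - (Q^2)⁻¹)⁻¹)) := by
    have h := (aux_E_tendsto hQ).mul (aux_S_tendsto hQ)
    rw [one_mul] at h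
    exact h
  have hval : (Q^2)⁻¹ * (1 - (Q^2)⁻¹)⁻¹ = (Q^2 - 1)⁻¹ := by
    have h1 : (0:ℝ) < Q^2 := by positivity
    have h2 : (0:ℝ) < Q^2 - 1 := by nlinarith
    field_simp
  rw [← hval]
  exact tendsto_of_tendsto_of_tendsto_of_le_of_le hlowt hhight hlow hhigh

private lemma aux_c_tendsto {Q : ℝ} (hQ : 2 ≤ Q) :
    Tendsto (fun w : ℕ => (1 + (Q^(w-2) - 1)/(Q^w - 1))⁻¹) atTop
      (nhds ((1 + (Q^2)⁻¹)⁻¹)) := by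
  have hQ1 : (1:ℝ) < Q := by linarith
  have hQ0 : (0:ℝ) < Q := by linarith
  have hp0 : (0:ℝ) ≤ Q⁻¹ := by positivity
  have hp1 : Q⁻¹ < 1 := inv_lt_one_of_one_lt₀ hQ1
  have hpw : Tendsto (fun w : ℕ => Q⁻¹^w) atTop (nhds 0) :=
    tendsto_pow_atTop_nhds_zero_of_lt_one hp0 hp1
  have hρ : Tendsto (fun w : ℕ => (Q^(w-2) - 1)/(Q^w - 1)) atTop (nhds ((Q^2)⁻¹)) := by
    have h1 : Tendsto (fun w : ℕ => ((Q^2)⁻¹ - Q⁻¹^w)/(1 - Q⁻¹^w)) atTop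
        (nhds ((Q^2)⁻¹)) := by
      have h1' : Tendsto (fun w : ℕ => ((Q^2)⁻¹ - Q⁻¹^w)) atTop (nhds ((Q^2)⁻¹ - 0)) :=
        tendsto_const_nhds.sub hpw
      have h2' : Tendsto (fun w : ℕ => ((1:ℝ) - Q⁻¹^w)) atTop (nhds (1 - 0)) :=
        tendsto_const_nhds.sub hpw
      have h := h1'.div h2' (by norm_num)
      rw [sub_zero, sub_zero, div_one] at h
      exact h.congr fun w => rfl
    refine h1.congr' ?_
    filter_upwards [eventually_ge_atTop 2] with w hw
    have e1 : Q^(w-2) * Q^2 = Q^w := by rw [← pow_add]; congr 1; omega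
    have hQw2 : (4:ℝ) ≤ Q^w := by
      calc (4:ℝ) ≤ Q^2 := by nlinarith
      _ ≤ Q^w := pow_le_pow_right₀ hQ1.le hw
    have hzw : Q⁻¹^w < 1 := pow_lt_one₀ hp0 hp1 (by omega)
    rw [div_eq_div_iff (by linarith) (by linarith)]
    rw [inv_pow, ← e1]
    have h2 : (0:ℝ) < Q^(w-2) := by positivity
    field_simp
  have hne : (1:ℝ) + (Q^2)⁻¹ ≠ 0 := by positivity
  exact (tendsto_const_nhds.add hρ).inv₀ hne

private lemma aux_c_bounds {Q : ℝ} (hQ : 2 ≤ Q) {w : ℕ} (hw : 2 ≤ w) :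
    0 < (1 + (Q^(w-2) - 1)/(Q^w - 1))⁻¹ ∧ (1 + (Q^(w-2) - 1)/(Q^w - 1))⁻¹ ≤ 1 := by
  have hQ1 : (1:ℝ) < Q := by linarith
  have h1 : (0:ℝ) < Q^w - 1 := by
    have : (2:ℝ) ≤ Q^w := by
      calc (2:ℝ) ≤ Q := hQ
      _ = Q^1 := (pow_one Q).symm
      _ ≤ Q^w := pow_le_pow_right₀ hQ1.le (by omega)
    linarith
  have h2 : (0:ℝ) ≤ Q^(w-2) - 1 := by
    have : (1:ℝ) ≤ Q^(w-2) := one_le_pow₀ hQ1.le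
    linarith
  have hρ : 0 ≤ (Q^(w-2) - 1)/(Q^w - 1) := div_nonneg h2 h1.le
  constructor
  · positivity
  · rw [inv_le_one_iff₀]
    right; linarith

private lemma aux_f2_bounds {K : Type} [Field K] [Finite K] (X : Curve K) (a : ℤ) (w : ℕ)
    (hw : 2 ≤ w) (ha0 : 0 ≤ a) (hg1 : 1 ≤ X.genus)
    (haw : (w:ℤ) ≤ (X.genus:ℤ) - 1 - a) :
    (-(12*(X.numPts:ℝ)) - 1) ≤ (X.f2 a : ℝ) ∧
    (X.f2 a : ℝ) ≤ ((X.genus : ℝ) - 1 - (a : ℝ) - (w : ℝ)) +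
          (1 + ((Nat.card K : ℝ) ^ (w - 2) - 1) / ((Nat.card K : ℝ) ^ w - 1))⁻¹ *
          (2 * (X.genus : ℝ) - 2 + 2 * (a : ℝ) + 4 * (w : ℝ) -
            2 * Gq (Nat.card K) w * (X.numPts : ℝ)) := by
  have hq : 2 ≤ Nat.card K := Finite.one_lt_card
  have hQ : (2:ℝ) ≤ (Nat.card K : ℝ) := by exact_mod_cast hq
  have hne : a ≠ (X.genus:ℤ) - 2 := by omega
  have hmid : -2 ≤ a ∧ a ≤ (X.genus:ℤ) - 3 := ⟨by omega, by omega⟩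
  have hkey : ∀ w' : ℕ, 2 ≤ w' → (w':ℤ) ≤ (X.genus:ℤ) - 1 - a →
      (-(12*(X.numPts:ℝ)) - 1) ≤ ((X.genus : ℝ) - 1 - (a : ℝ) - (w' : ℝ)) +
        (1 + ((Nat.card K : ℝ) ^ (w' - 2) - 1) / ((Nat.card K : ℝ) ^ w' - 1))⁻¹ *
        (2 * (X.genus : ℝ) - 2 + 2 * (a : ℝ) + 4 * (w' : ℝ) -
          2 * Gq (Nat.card K) w' * (X.numPts : ℝ)) := by
    intro w' h2w hle
    obtain ⟨hc0, hc1⟩ := aux_c_bounds hQ h2w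
    have hG0 := aux_Gq_nonneg hq w'
    have hG6 := aux_Gq_le hq w'
    have hN0 : (0:ℝ) ≤ (X.numPts : ℝ) := Nat.cast_nonneg _
    have hle' : (w' : ℝ) ≤ (X.genus : ℝ) - 1 - (a:ℝ) := by exact_mod_cast hle
    have ha0' : (0:ℝ) ≤ (a:ℝ) := by exact_mod_cast ha0
    have hg1' : (1:ℝ) ≤ (X.genus : ℝ) := by exact_mod_cast hg1
    have hw0 : (0:ℝ) ≤ (w' : ℝ) := Nat.cast_nonneg _
    set c' := (1 + ((Nat.card K : ℝ) ^ (w' - 2) - 1) / ((Nat.card K : ℝ) ^ w' - 1))⁻¹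
    set G := Gq (Nat.card K) w'
    set N := (X.numPts : ℝ)
    have hx : (0:ℝ) ≤ 2 * (X.genus : ℝ) - 2 + 2 * (a:ℝ) + 4 * (w':ℝ) := by linarith
    have key1 : c' * (2 * (X.genus : ℝ) - 2 + 2 * (a:ℝ) + 4 * (w':ℝ) - 2*G*N) ≥ -(12*N) := by
      have h1 : c' * (-(2*G*N)) ≤ c' * (2 * (X.genus : ℝ) - 2 + 2 * (a:ℝ) + 4 * (w':ℝ) - 2*G*N) :=
        mul_le_mul_of_nonneg_left (by linarith) hc0.le
      have hGN : 0 ≤ 2*G*N := by positivity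
      have h2 : -(2*G*N) ≤ c' * (-(2*G*N)) := by nlinarith
      have h3 : 2*G*N ≤ 12*N := by nlinarith
      linarith
    linarith
  unfold Curve.f2
  rw [if_neg hne, if_pos hmid, if_pos ‹Finite K›]
  have hlbmem : ∀ m ∈ {m : ℤ | ∃ w : ℕ, 2 ≤ w ∧ (w : ℤ) ≤ (X.genus : ℤ) - 1 - a ∧
        m = ⌊((X.genus : ℝ) - 1 - (a : ℝ) - (w : ℝ)) +
          (1 + ((Nat.card K : ℝ) ^ (w - 2) - 1) / ((Nat.card K : ℝ) ^ w - 1))⁻¹ *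
          (2 * (X.genus : ℝ) - 2 + 2 * (a : ℝ) + 4 * (w : ℝ) -
            2 * Gq (Nat.card K) w * (X.numPts : ℝ))⌋},
      (-(12*(X.numPts:ℤ)) - 1) ≤ m := by
    rintro m ⟨w', hw'1, hw'2, rfl⟩
    rw [Int.le_floor]
    push_cast
    exact hkey w' hw'1 hw'2
  constructor
  · have h1 : (-(12*(X.numPts:ℤ)) - 1) ≤ sInf {m : ℤ | ∃ w : ℕ, 2 ≤ w ∧
        (w : ℤ) ≤ (X.genus : ℤ) - 1 - a ∧
        m = ⌊((X.genus : ℝ) - 1 - (a : ℝ) - (w : ℝ)) +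
          (1 + ((Nat.card K : ℝ) ^ (w - 2) - 1) / ((Nat.card K : ℝ) ^ w - 1))⁻¹ *
          (2 * (X.genus : ℝ) - 2 + 2 * (a : ℝ) + 4 * (w : ℝ) -
            2 * Gq (Nat.card K) w * (X.numPts : ℝ))⌋} := by
      refine le_csInf ⟨_, ⟨w, hw, haw, rfl⟩⟩ hlbmem
    calc (-(12*(X.numPts:ℝ)) - 1) = ((-(12*(X.numPts:ℤ)) - 1 : ℤ) : ℝ) := by push_cast; ring
    _ ≤ _ := by exact_mod_cast h1
  · have h2 : sInf {m : ℤ | ∃ w : ℕ, 2 ≤ w ∧ (w : ℤ) ≤ (X.genus : ℤ) - 1 - a ∧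
        m = ⌊((X.genus : ℝ) - 1 - (a : ℝ) - (w : ℝ)) +
          (1 + ((Nat.card K : ℝ) ^ (w - 2) - 1) / ((Nat.card K : ℝ) ^ w - 1))⁻¹ *
          (2 * (X.genus : ℝ) - 2 + 2 * (a : ℝ) + 4 * (w : ℝ) -
            2 * Gq (Nat.card K) w * (X.numPts : ℝ))⌋} ≤
        ⌊((X.genus : ℝ) - 1 - (a : ℝ) - (w : ℝ)) +
          (1 + ((Nat.card K : ℝ) ^ (w - 2) - 1) / ((Nat.card K : ℝ) ^ w - 1))⁻¹ *
          (2 * (X.genus : ℝ) - 2 + 2 * (a : ℝ) + 4 * (w : ℝ) -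
            2 * Gq (Nat.card K) w * (X.numPts : ℝ))⌋ :=
      csInf_le ⟨_, hlbmem⟩ ⟨w, hw, haw, rfl⟩
    calc ((sInf _ : ℤ) : ℝ) ≤ (((⌊((X.genus : ℝ) - 1 - (a : ℝ) - (w : ℝ)) +
          (1 + ((Nat.card K : ℝ) ^ (w - 2) - 1) / ((Nat.card K : ℝ) ^ w - 1))⁻¹ *
          (2 * (X.genus : ℝ) - 2 + 2 * (a : ℝ) + 4 * (w : ℝ) -
            2 * Gq (Nat.card K) w * (X.numPts : ℝ))⌋ : ℤ)) : ℝ) := by exact_mod_cast h2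
    _ ≤ _ := Int.floor_le _

end AuxiliaryLemmas

set_option maxHeartbeats 1600000 in
/-- Lemma "ptesdiverses" b): for `s ∈ {1,2}` and reals `α ∉ {0,1}`, `ν`, given a
sequence of curves `X⁽ʲ⁾` of genus `g⁽ʲ⁾ → ∞` with `a⁽ʲ⁾/g⁽ʲ⁾ → α` and
`liminf |X⁽ʲ⁾(K)|/g⁽ʲ⁾ ≥ ν`, one has
`limsup f_{s,X⁽ʲ⁾}(a⁽ʲ⁾)/g⁽ʲ⁾ ≤ φ_{s,ν}(α)`. -/
theorem statement_9 {K : Type} [Field K] [PerfectField K]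
    (s : ℕ) (hs : s = 1 ∨ s = 2)
    (α ν : ℝ) (hα0 : α ≠ 0) (hα1 : α ≠ 1)
    (X : ℕ → Curve K) (a : ℕ → ℤ)
    (hg : Tendsto (fun j => ((X j).genus : ℝ)) atTop atTop)
    (ha : Tendsto (fun j => (a j : ℝ) / ((X j).genus : ℝ)) atTop (nhds α))
    (hN : ν ≤ liminf (fun j => ((X j).numPts : ℝ) / ((X j).genus : ℝ)) atTop) :
    limsup (fun j => ((X j).fs s (a j) : ℝ) / ((X j).genus : ℝ)) atTop ≤
      phis K s ν α := by
  have hgpos : ∀ᶠ j in atTop, (0:ℝ) < ((X j).genus : ℝ) := hg.eventually_gt_atTop 0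
  have hg1ev : ∀ᶠ j in atTop, (1:ℝ) ≤ ((X j).genus : ℝ) := hg.eventually_ge_atTop 1
  rcases lt_trichotomy α 0 with hneg | h0 | hpos
  · -- α < 0 : eventually a j ≤ -3, so fs = 0
    have hz : ∀ᶠ j in atTop, ((X j).fs s (a j) : ℝ) / ((X j).genus : ℝ) = 0 := by
      filter_upwards [ha.eventually_lt_const (show α < α/2 by linarith),
        hg.eventually_ge_atTop (6/(-α)), hgpos] with j hj1 hj2 hj0
      have h1 : (a j : ℝ) < α/2 * ((X j).genus : ℝ) := (div_lt_iff₀ hj0).1 hj1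
      have h6 : 6 ≤ ((X j).genus : ℝ) * (-α) := (div_le_iff₀ (by linarith)).1 hj2
      have h3 : (a j : ℝ) < -3 := by nlinarith
      have h4 : a j < -2 := by
        have : (a j : ℝ) < -2 := by linarith
        exact_mod_cast this
      rcases hs with rfl | rfl
      · unfold Curve.fs Curve.f1
        rw [if_pos rfl, if_neg (by omega), if_neg (by omega)]
        norm_num
      · unfold Curve.fs Curve.f2
        rw [if_neg (by norm_num), if_neg (by omega), if_neg (by omega)]
        norm_num
    have hlim : Tendsto (fun j => ((X j).fs s (a j) : ℝ) / ((X j).genus : ℝ)) atTop (nhds 0) :=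
      Tendsto.congr' (hz.mono fun j hj => hj.symm) tendsto_const_nhds
    rw [hlim.limsup_eq]
    rcases hs with rfl | rfl
    · simp [phis, phi1, hneg.not_ge]
    · simp [phis, phi2, hneg.not_ge, hα1]
  · exact absurd h0 hα0
  rcases lt_trichotomy α 1 with hlt | h1 | hgt
  swap
  · exact absurd h1 hα1
  swap
  · -- α > 1 : eventually a j ≥ g + 2, so fs = 0
    have hz : ∀ᶠ j in atTop, ((X j).fs s (a j) : ℝ) / ((X j).genus : ℝ) = 0 := by
      filter_upwards [ha.eventually_const_lt (show (1+α)/2 < α by linarith),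
        hg.eventually_ge_atTop (4/(α-1)), hgpos] with j hj1 hj2 hj0
      have h1 : (1+α)/2 * ((X j).genus : ℝ) < (a j : ℝ) := (lt_div_iff₀ hj0).1 hj1
      have h4 : 4 ≤ ((X j).genus : ℝ) * (α-1) := (div_le_iff₀ (by linarith)).1 hj2
      have h3 : ((X j).genus : ℝ) + 2 ≤ (a j : ℝ) := by nlinarith
      have h5 : ((X j).genus : ℤ) + 2 ≤ a j := by exact_mod_cast h3
      rcases hs with rfl | rfl
      · unfold Curve.fs Curve.f1
        rw [if_pos rfl, if_neg (by omega), if_neg (by omega)]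
        norm_num
      · unfold Curve.fs Curve.f2
        rw [if_neg (by norm_num), if_neg (by omega), if_neg (by omega)]
        norm_num
    have hlim : Tendsto (fun j => ((X j).fs s (a j) : ℝ) / ((X j).genus : ℝ)) atTop (nhds 0) :=
      Tendsto.congr' (hz.mono fun j hj => hj.symm) tendsto_const_nhds
    rw [hlim.limsup_eq]
    rcases hs with rfl | rfl
    · simp [phis, phi1, show ¬ (0 ≤ α ∧ α ≤ 1) from fun h => absurd h.2 (by linarith)]
    · simp [phis, phi2, show ¬ (0 ≤ α ∧ α < 1) from fun h => absurd h.2 (by linarith), hα1]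
  -- main case : 0 < α < 1
  have hEa1 : ∀ᶠ j in atTop, 1 ≤ a j := by
    filter_upwards [ha.eventually_const_lt (show α/2 < α by linarith),
      hg.eventually_ge_atTop (2/α), hgpos] with j hj1 hj2 hj0
    have h1 : α/2 * ((X j).genus : ℝ) < (a j : ℝ) := (lt_div_iff₀ hj0).1 hj1
    have h2 : 2 ≤ ((X j).genus : ℝ) * α := (div_le_iff₀ (by linarith)).1 hj2
    have h3 : (1:ℝ) ≤ (a j : ℝ) := by nlinarith
    exact_mod_cast h3
  have hEa2 : ∀ w : ℕ, ∀ᶠ j in atTop,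
      (w:ℤ) ≤ ((X j).genus : ℤ) - 1 - a j ∧ a j ≤ ((X j).genus : ℤ) - 3 := by
    intro w
    filter_upwards [ha.eventually_lt_const (show α < (1+α)/2 by linarith),
      hg.eventually_ge_atTop (2*((w:ℝ)+3)/(1-α)), hgpos] with j hj1 hj2 hj0
    have h1 : (a j : ℝ) < (1+α)/2 * ((X j).genus : ℝ) := (div_lt_iff₀ hj0).1 hj1
    have h2 : 2*((w:ℝ)+3) ≤ ((X j).genus : ℝ) * (1-α) := (div_le_iff₀ (by linarith)).1 hj2
    have h3 : (a j : ℝ) + ((w:ℝ)+3) ≤ ((X j).genus : ℝ) := by nlinarith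
    have h4 : a j + ((w:ℤ)+3) ≤ ((X j).genus : ℤ) := by exact_mod_cast h3
    exact ⟨by omega, by omega⟩
  rcases hs with rfl | rfl
  · -- s = 1
    have hb : ∀ᶠ j in atTop, (0:ℝ) ≤ ((X j).fs 1 (a j) : ℝ) / ((X j).genus : ℝ) ∧
        ((X j).fs 1 (a j) : ℝ) / ((X j).genus : ℝ) ≤ 1 := by
      filter_upwards [hg1ev, hgpos] with j h1 h0
      have hgn : 1 ≤ ((X j).genus : ℤ) := by exact_mod_cast h1
      have hf : (0:ℤ) ≤ (X j).fs 1 (a j) ∧ (X j).fs 1 (a j) ≤ ((X j).genus : ℤ) := by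
        unfold Curve.fs Curve.f1
        rw [if_pos rfl]
        split_ifs <;> omega
      constructor
      · exact div_nonneg (by exact_mod_cast hf.1) h0.le
      · rw [div_le_one h0]; exact_mod_cast hf.2
    have hphi : phis K 1 ν α = 1 := by simp [phis, phi1, hpos.le, hlt.le]
    rw [hphi]
    exact aux_limsup_le (hb.mono fun j h => h.1) (hb.mono fun j h => h.2)
  by_cases hK : Finite K
  swap
  · -- s = 2, K infinite
    have hzz : ∀ᶠ j in atTop, ((X j).fs 2 (a j) : ℝ) / ((X j).genus : ℝ)
        = 3 + 3*(((X j).genus : ℝ))⁻¹ + (a j : ℝ)/((X j).genus : ℝ) := by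
      filter_upwards [hEa1, hEa2 2, hgpos] with j h1 h2 h0
      have e : (X j).fs 2 (a j) = 3*((X j).genus : ℤ) + 3 + a j := by
        unfold Curve.fs Curve.f2
        rw [if_neg (by norm_num), if_neg (by omega), if_pos ⟨by omega, h2.2⟩, if_neg hK]
      rw [e]
      push_cast
      field_simp
    have hten : Tendsto (fun j => 3 + 3*(((X j).genus : ℝ))⁻¹ + (a j : ℝ)/((X j).genus : ℝ))
        atTop (nhds (3 + 3*0 + α)) :=
      (tendsto_const_nhds.add (hg.inv_tendsto_atTop.const_mul 3)).add ha
    have hlim : Tendsto (fun j => ((X j).fs 2 (a j) : ℝ) / ((X j).genus : ℝ)) atTop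
        (nhds (3 + 3*0 + α)) := hten.congr' (hzz.mono fun j hj => hj.symm)
    rw [hlim.limsup_eq]
    have hphi : phis K 2 ν α = 3 + α := by simp [phis, phi2, hK, hpos.le, hlt]
    rw [hphi]
    norm_num
  · -- s = 2, K finite : the main case
    haveI := hK
    have hq : 2 ≤ Nat.card K := Finite.one_lt_card
    have hphi : phis K 2 ν α =
        (3 * (Nat.card K : ℝ) ^ 2 + 1) / ((Nat.card K : ℝ) ^ 2 + 1)
        + ((Nat.card K : ℝ) ^ 2 - 1) / ((Nat.card K : ℝ) ^ 2 + 1) * α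
        - (2 * (Nat.card K : ℝ) ^ 2 / ((Nat.card K : ℝ) ^ 4 - 1)) * ν := by
      simp [phis, phi2, hK, hpos.le, hlt]
    rw [hphi]
    obtain ⟨Q, hQdef⟩ : ∃ x : ℝ, x = (Nat.card K : ℝ) := ⟨_, rfl⟩
    rw [← hQdef]
    have hQ : (2:ℝ) ≤ Q := by rw [hQdef]; exact_mod_cast hq
    obtain ⟨Φ, hΦdef⟩ : ∃ x : ℝ, x = (3 * Q ^ 2 + 1) / (Q ^ 2 + 1)
        + (Q ^ 2 - 1) / (Q ^ 2 + 1) * α - 2 * Q ^ 2 / (Q ^ 4 - 1) * ν := ⟨_, rfl⟩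
    rw [← hΦdef]
    obtain ⟨u, hudef⟩ : ∃ u' : ℕ → ℝ,
        u' = fun j => ((X j).fs 2 (a j) : ℝ) / ((X j).genus : ℝ) := ⟨_, rfl⟩
    rw [← hudef]
    -- the key eventual bounds, for every w ≥ 2
    have hup : ∀ w : ℕ, 2 ≤ w → ∀ᶠ j in atTop,
        u j ≤ (((X j).genus : ℝ) - 1 - (a j : ℝ) - (w : ℝ)
            + (1 + (Q ^ (w - 2) - 1) / (Q ^ w - 1))⁻¹ *
              (2 * ((X j).genus : ℝ) - 2 + 2 * (a j : ℝ) + 4 * (w : ℝ) -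
                2 * Gq (Nat.card K) w * ((X j).numPts : ℝ))) / ((X j).genus : ℝ) ∧
        -12 * (((X j).numPts : ℝ)/((X j).genus : ℝ)) - 1 ≤ u j := by
      intro w hw
      filter_upwards [hEa1, hEa2 w, hg1ev, hgpos] with j h1 h2 hg1j h0
      have hgn : 1 ≤ (X j).genus := by exact_mod_cast hg1j
      have hfs2 : (X j).fs 2 (a j) = (X j).f2 (a j) := by
        unfold Curve.fs; rw [if_neg (by norm_num)]
      obtain ⟨hlow, hupp⟩ := aux_f2_bounds (X j) (a j) w hw (by omega) hgn h2.1
      constructor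
      · simp only [hudef]
        rw [hQdef, hfs2]
        exact div_le_div_of_nonneg_right hupp h0.le
      · simp only [hudef]
        rw [hfs2]
        have e1 : (-(12*((X j).numPts:ℝ)) - 1)/((X j).genus : ℝ) ≤
            ((X j).f2 (a j) : ℝ)/((X j).genus : ℝ) :=
          div_le_div_of_nonneg_right hlow h0.le
        refine le_trans ?_ e1
        rw [le_div_iff₀ h0]
        have hc : ((X j).numPts : ℝ)/((X j).genus : ℝ) * ((X j).genus : ℝ)
            = ((X j).numPts : ℝ) := div_mul_cancel₀ _ h0.ne'
        nlinarith [hc, hg1j]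
    rw [Filter.limsup_eq]
    by_cases hBdd : BddBelow {b : ℝ | ∀ᶠ j in atTop, u j ≤ b}
    · -- bounded below : pick good w and conclude
      refine le_of_forall_gt_imp_ge_of_dense fun b hb => ?_
      have hε0 : 0 < b - Φ := by linarith
      have hct : Tendsto (fun w : ℕ => (1 + (Q ^ (w-2) - 1)/(Q ^ w - 1))⁻¹) atTop
          (nhds ((1 + (Q^2)⁻¹)⁻¹)) := by rw [hQdef]; exact aux_c_tendsto (by exact_mod_cast hq)
      have hGt : Tendsto (fun w : ℕ => Gq (Nat.card K) w) atTop (nhds ((Q^2 - 1)⁻¹)) := by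
        rw [hQdef]; exact aux_Gq_tendsto hq
      have hBt : Tendsto (fun w : ℕ => (1-α) + (1 + (Q ^ (w-2) - 1)/(Q ^ w - 1))⁻¹ * (2+2*α)
          - 2*((1 + (Q ^ (w-2) - 1)/(Q ^ w - 1))⁻¹ * Gq (Nat.card K) w)*ν) atTop
          (nhds ((1-α) + (1 + (Q^2)⁻¹)⁻¹ * (2+2*α) - 2*((1 + (Q^2)⁻¹)⁻¹ * (Q^2-1)⁻¹)*ν)) :=
        (tendsto_const_nhds.add (hct.mul tendsto_const_nhds)).sub
          (((hct.mul hGt).const_mul 2).mul tendsto_const_nhds)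
      have hLΦ : (1-α) + (1 + (Q^2)⁻¹)⁻¹ * (2+2*α) - 2*((1 + (Q^2)⁻¹)⁻¹ * (Q^2-1)⁻¹)*ν = Φ := by
        rw [hΦdef]
        have h1 : (0:ℝ) < Q^2 + 1 := by positivity
        have h2 : (0:ℝ) < Q^2 - 1 := by nlinarith
        have h4 : (0:ℝ) < Q^4 - 1 := by nlinarith
        have h0 : (0:ℝ) < Q^2 := by positivity
        field_simp
        ring
      obtain ⟨w, hwB, hw2⟩ := ((hBt.eventually_lt_const
        (show (1-α) + (1 + (Q^2)⁻¹)⁻¹ * (2+2*α) - 2*((1 + (Q^2)⁻¹)⁻¹ * (Q^2-1)⁻¹)*ν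
          < Φ + (b - Φ)/2 by linarith [hLΦ])).and (eventually_ge_atTop 2)).exists
      obtain ⟨hc0, hc1⟩ := aux_c_bounds hQ hw2
      obtain ⟨cw, hcwdef⟩ : ∃ x : ℝ, x = (1 + (Q ^ (w-2) - 1)/(Q ^ w - 1))⁻¹ := ⟨_, rfl⟩
      obtain ⟨Gw, hGwdef⟩ : ∃ x : ℝ, x = Gq (Nat.card K) w := ⟨_, rfl⟩
      rw [← hcwdef] at hc0 hc1
      have hG0 : 0 ≤ Gw := by rw [hGwdef]; exact aux_Gq_nonneg hq w
      have hG6 : Gw ≤ 6 := by rw [hGwdef]; exact aux_Gq_le hq w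
      rw [← hcwdef, ← hGwdef] at hwB
      have hcG : 0 ≤ 2*cw*Gw := mul_nonneg (by linarith) hG0
      obtain ⟨δ, hδdef⟩ : ∃ x : ℝ, x = (b - Φ)/(8*(1+2*cw*Gw)) := ⟨_, rfl⟩
      have hδ0 : 0 < δ := by
        rw [hδdef]
        exact div_pos hε0 (by linarith)
      have hδε : 2*cw*Gw*δ ≤ (b - Φ)/8 := by
        have h1 : 2*cw*Gw*δ = (b-Φ)/8 * (2*cw*Gw/(1+2*cw*Gw)) := by
          rw [hδdef]
          field_simp
        have h2 : 2*cw*Gw/(1+2*cw*Gw) ≤ 1 := by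
          rw [div_le_one (by linarith)]
          linarith
        calc 2*cw*Gw*δ = (b-Φ)/8 * (2*cw*Gw/(1+2*cw*Gw)) := h1
          _ ≤ (b-Φ)/8 * 1 := mul_le_mul_of_nonneg_left h2 (by linarith)
          _ = (b-Φ)/8 := mul_one _
      -- eventually N/g > ν - δ
      have hNev : ∀ᶠ j in atTop, ν - δ < ((X j).numPts : ℝ)/((X j).genus : ℝ) := by
        have hsup : ν ≤ sSup {x : ℝ | ∀ᶠ j in atTop,
            x ≤ ((X j).numPts : ℝ)/((X j).genus : ℝ)} := by
          rw [Filter.liminf_eq] at hN; exact hN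
        have hmem : (-1:ℝ) ∈ {x : ℝ | ∀ᶠ j in atTop,
            x ≤ ((X j).numPts : ℝ)/((X j).genus : ℝ)} := by
          filter_upwards [hgpos] with j h0
          have : (0:ℝ) ≤ ((X j).numPts : ℝ)/((X j).genus : ℝ) := by positivity
          linarith
        by_contra hcon
        have hub : ∀ x ∈ {x : ℝ | ∀ᶠ j in atTop,
            x ≤ ((X j).numPts : ℝ)/((X j).genus : ℝ)}, x ≤ ν - δ := by
          intro x hx
          by_contra hx2
          push_neg at hx2
          exact hcon (hx.mono fun j hj => lt_of_lt_of_le hx2 hj)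
        have := csSup_le ⟨-1, hmem⟩ hub
        linarith
      -- the deterministic part tends to (1-α) + cw*(2+2α)
      have hvt : Tendsto (fun j => (1 - (((1:ℝ)+(w:ℝ))*(((X j).genus : ℝ))⁻¹
            + (a j : ℝ)/((X j).genus : ℝ)))
          + cw*(2 + ((4*(w:ℝ)-2))*(((X j).genus : ℝ))⁻¹ + 2*((a j : ℝ)/((X j).genus : ℝ))))
          atTop (nhds ((1 - α) + cw*(2 + 2*α))) := by
        have hi : Tendsto (fun j => (((X j).genus : ℝ))⁻¹) atTop (nhds 0) :=
          hg.inv_tendsto_atTop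
        have t1 : Tendsto (fun j => ((1:ℝ)+(w:ℝ))*(((X j).genus : ℝ))⁻¹
            + (a j : ℝ)/((X j).genus : ℝ)) atTop (nhds α) := by
          have := (hi.const_mul ((1:ℝ)+(w:ℝ))).add ha
          rw [mul_zero, zero_add] at this
          exact this
        have t2 : Tendsto (fun j => 2 + ((4*(w:ℝ)-2))*(((X j).genus : ℝ))⁻¹
            + 2*((a j : ℝ)/((X j).genus : ℝ))) atTop (nhds (2 + 2*α)) := by
          have t2a : Tendsto (fun j => (2:ℝ) + ((4*(w:ℝ)-2))*(((X j).genus : ℝ))⁻¹) atTop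
              (nhds (2 + (4*(w:ℝ)-2) * 0)) := tendsto_const_nhds.add (hi.const_mul _)
          have := t2a.add (ha.const_mul 2)
          rw [mul_zero, add_zero] at this
          exact this
        exact (tendsto_const_nhds.sub t1).add (t2.const_mul cw)
      have hvev := hvt.eventually_lt_const
        (show (1 - α) + cw*(2 + 2*α) < (1 - α) + cw*(2 + 2*α) + (b-Φ)/8 by linarith)
      -- conclude : b is an eventual upper bound of u
      refine csInf_le hBdd ?_
      show ∀ᶠ j in atTop, u j ≤ b
      filter_upwards [hup w hw2, hNev, hvev, hgpos] with j hj1 hj2 hj3 h0j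
      obtain ⟨hj1a, -⟩ := hj1
      rw [← hcwdef, ← hGwdef] at hj1a
      have hsplit : (((X j).genus : ℝ) - 1 - (a j : ℝ) - (w : ℝ)
            + cw * (2 * ((X j).genus : ℝ) - 2 + 2 * (a j : ℝ) + 4 * (w : ℝ) -
                2 * Gw * ((X j).numPts : ℝ))) / ((X j).genus : ℝ)
          = ((1 - (((1:ℝ)+(w:ℝ))*(((X j).genus : ℝ))⁻¹ + (a j : ℝ)/((X j).genus : ℝ)))
          + cw*(2 + ((4*(w:ℝ)-2))*(((X j).genus : ℝ))⁻¹ + 2*((a j : ℝ)/((X j).genus : ℝ))))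
            - 2*cw*Gw*(((X j).numPts : ℝ)/((X j).genus : ℝ)) := by
        field_simp
        ring
      have step1 : u j ≤ ((1 - (((1:ℝ)+(w:ℝ))*(((X j).genus : ℝ))⁻¹
            + (a j : ℝ)/((X j).genus : ℝ)))
          + cw*(2 + ((4*(w:ℝ)-2))*(((X j).genus : ℝ))⁻¹ + 2*((a j : ℝ)/((X j).genus : ℝ))))
            - 2*cw*Gw*(((X j).numPts : ℝ)/((X j).genus : ℝ)) := by
        rw [← hsplit]
        exact hj1a
      have step2 : 2*cw*Gw*(ν - δ) ≤ 2*cw*Gw*(((X j).numPts : ℝ)/((X j).genus : ℝ)) :=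
        mul_le_mul_of_nonneg_left hj2.le hcG
      linarith [hj3, hδε, step1, step2, hwB]
    · -- not bounded below : u → -∞, so N/g → ∞ and ν ≤ 0, while Φ ≥ 0
      rw [Real.sInf_of_not_bddBelow hBdd]
      have hatBot : Tendsto u atTop atBot := by
        rw [tendsto_atBot]
        intro b
        rw [not_bddBelow_iff] at hBdd
        obtain ⟨y, hy, hyb⟩ := hBdd b
        exact hy.mono fun j hj => hj.trans hyb.le
      have hNt : Tendsto (fun j => ((X j).numPts : ℝ)/((X j).genus : ℝ)) atTop atTop := by
        rw [tendsto_atTop]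
        intro b
        filter_upwards [hup 2 le_rfl, (tendsto_atBot.1 hatBot) (-12*b - 1)] with j hj1 hj2
        have h := hj1.2
        linarith
      have hνle : ν ≤ 0 := by
        have hset : {x : ℝ | ∀ᶠ j in atTop, x ≤ ((X j).numPts : ℝ)/((X j).genus : ℝ)}
            = Set.univ := Set.eq_univ_of_forall fun x => hNt.eventually_ge_atTop x
        rw [Filter.liminf_eq, hset, Real.sSup_univ] at hN
        exact hN
      have h1 : (0:ℝ) < Q^2 + 1 := by positivity
      have h2 : (0:ℝ) < Q^2 - 1 := by nlinarith
      have h4 : (0:ℝ) < Q^4 - 1 := by nlinarith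
      have t1 : (0:ℝ) ≤ (3*Q^2+1)/(Q^2+1) := by positivity
      have t2 : (0:ℝ) ≤ (Q^2-1)/(Q^2+1)*α := mul_nonneg (div_nonneg h2.le h1.le) hpos.le
      have t3 : (2*Q^2/(Q^4-1))*ν ≤ 0 :=
        mul_nonpos_of_nonneg_of_nonpos (div_nonneg (by positivity) h4.le) hνle
      rw [hΦdef]
      linarith
end

section
/- Let p be a prime with p ≠ 2. Then for every real number x ≥ 3/2 there exists a positive integer N coprime to p such that x ≤ ψ(N) ≤ 2x, where ψ is Dedekind's psi function; equivalently, the smallest value of ψ on integers coprime to p that is ≥ x is at most 2x. -/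
noncomputable section

/-- Dedekind's psi function: `ψ(N) = N ∏_{l | N, l prime} (1 + 1/l)`. -/
def dedekindPsi (N : ℕ) : ℝ :=
  (N : ℝ) * ∏ l ∈ N.primeFactors, (1 + 1 / (l : ℝ))

/-- Lemma "psiBertrand": for a prime `p ≠ 2` and every real `x ≥ 3/2` there is a
positive integer `N` coprime to `p` with `x ≤ ψ(N) ≤ 2x`. -/
theorem statement_19 (p : ℕ) (hp : p.Prime) (hp2 : p ≠ 2)
    (x : ℝ) (hx : 3 / 2 ≤ x) :
    ∃ N : ℕ, 0 < N ∧ N.Coprime p ∧ x ≤ dedekindPsi N ∧ dedekindPsi N ≤ 2 * x := by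
  have hpsi : ∀ k : ℕ, dedekindPsi (2 ^ (k + 1)) = 3 * 2 ^ k := by
    intro k
    have h1 : (2 ^ (k + 1) : ℕ).primeFactors = {2} :=
      Nat.primeFactors_prime_pow (Nat.succ_ne_zero k) Nat.prime_two
    simp only [dedekindPsi, h1, Finset.prod_singleton]
    push_cast
    ring
  have hex : ∃ k : ℕ, x ≤ 3 * 2 ^ k := by
    obtain ⟨n, hn⟩ := pow_unbounded_of_one_lt x (one_lt_two (α := ℝ))
    exact ⟨n, le_trans hn.le (by nlinarith [pow_pos (zero_lt_two (α := ℝ)) n])⟩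
  classical
  set k := Nat.find hex with hk
  have hkx : x ≤ 3 * 2 ^ k := Nat.find_spec hex
  have hcop : (2 ^ (k + 1)).Coprime p :=
    Nat.Coprime.pow_left _ ((Nat.coprime_primes Nat.prime_two hp).mpr (Ne.symm hp2))
  refine ⟨2 ^ (k + 1), Nat.pow_pos (by norm_num), hcop, ?_, ?_⟩
  · rw [hpsi k]; exact hkx
  · rw [hpsi k]
    rcases Nat.eq_zero_or_pos k with h0 | h0
    · rw [h0]; norm_num; linarith
    · have hm : ¬ x ≤ 3 * 2 ^ (k - 1) := Nat.find_min hex (by omega)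
      push_neg at hm
      have hke : k = (k - 1) + 1 := by omega
      rw [hke, pow_succ]
      linarith

end
end
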